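/- Let p be a prime and n a nonnegative integer. Then n can be written uniquely as n = Σ_{i=0}^{l} n_i p^i with p-1 ≤ n_i ≤ 2p-2 for all i < l and 0 ≤ n_l ≤ p-1. -/

import Mathlib

namespace AdaptedExp

/-- The predicate for plain functions. -/
def P (p : ℕ) (f : ℕ → ℕ) (l n : ℕ) : Prop :=
  (∀ i < l, p - 1 ≤ f i ∧ f i ≤ 2 * p - 2) ∧
  f l ≤ p - 1 ∧
  (∀ i > l, f i = 0) ∧
  n = ∑ i ∈ Finset.range (l + 1), f i * p ^ i

lemma sum_shift (p : ℕ) (f : ℕ → ℕ) (k : ℕ) :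
    ∑ i ∈ Finset.range (k + 1 + 1), f i * p ^ i
      = p * ∑ i ∈ Finset.range (k + 1), f (i + 1) * p ^ i + f 0 := by
  rw [Finset.sum_range_succ' (fun i => f i * p ^ i) (k + 1), Finset.mul_sum]
  simp only [pow_zero, mul_one, pow_succ]
  congr 1
  apply Finset.sum_congr rfl
  intro i _
  ring

lemma ex (p : ℕ) (hp : 2 ≤ p) : ∀ n, ∃ f l, P p f l n := by
  intro n
  induction n using Nat.strong_induction_on with
  | _ n IH =>
    by_cases hn : n < p
    · refine ⟨fun i => if i = 0 then n else 0, 0, ?_, ?_, ?_, ?_⟩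
      · intro i hi; omega
      · simp; omega
      · intro i hi; exact if_neg (by omega)
      · simp
    · push_neg at hn
      set m := (n - (p - 1)) / p with hm
      set r := (n - (p - 1)) % p with hr
      have hrp : r < p := Nat.mod_lt _ (by omega)
      have hdm : p * m + r = n - (p - 1) := Nat.div_add_mod _ _
      have hmn : m < n := by
        have h1 : m ≤ (n - (p - 1)) := Nat.div_le_self _ _
        have h2 : (n - (p-1)) / p < n - (p-1) ∨ n - (p-1) ≤ 1 := by
          rcases Nat.lt_or_ge (n - (p-1)) 2 with h | h
          · right; omega
          · left; exact Nat.div_lt_self (by omega) (by omega)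
        rcases h2 with h2 | h2
        · omega
        · -- n - (p-1) ≤ 1 so m ≤ 1/p = 0
          have : m ≤ 1 / p := by rw [hm]; exact Nat.div_le_div_right h2
          have : (1 : ℕ) / p = 0 := Nat.div_eq_of_lt (by omega)
          omega
      obtain ⟨g, l', hg⟩ := IH m hmn
      obtain ⟨hg1, hg2, hg3, hg4⟩ := hg
      refine ⟨fun i => if i = 0 then p - 1 + r else g (i - 1), l' + 1, ?_, ?_, ?_, ?_⟩
      · intro i hi
        rcases Nat.eq_zero_or_pos i with h0 | h0
        · subst h0; simp; omega
        · obtain ⟨j, rfl⟩ := Nat.exists_eq_succ_of_ne_zero (by omega : i ≠ 0)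
          simp only [Nat.succ_ne_zero, if_false, Nat.succ_sub_one]
          exact hg1 j (by omega)
      · simp only [Nat.succ_ne_zero, if_false, Nat.succ_sub_one]; exact hg2
      · intro i hi
        obtain ⟨j, rfl⟩ := Nat.exists_eq_succ_of_ne_zero (by omega : i ≠ 0)
        simp only [Nat.succ_ne_zero, if_false, Nat.succ_sub_one]
        exact hg3 j (by omega)
      · have heq : ∑ i ∈ Finset.range (l' + 1),
            (if i + 1 = 0 then p - 1 + r else g (i + 1 - 1)) * p ^ i
            = ∑ i ∈ Finset.range (l' + 1), g i * p ^ i := by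
          apply Finset.sum_congr rfl; intro i _; simp
        have h0 : (if (0 : ℕ) = 0 then p - 1 + r else g (0 - 1)) = p - 1 + r := rfl
        rw [sum_shift, heq, ← hg4, h0]
        omega

/-- The determined lowest digit. -/
def D (p n : ℕ) : ℕ := if n < p then n else p - 1 + (n - (p - 1)) % p

lemma step (p : ℕ) (hp : 2 ≤ p) {f : ℕ → ℕ} {l n : ℕ} (h : P p f l n) :
    f 0 = D p n ∧ ∃ l', P p (fun i => f (i + 1)) l' ((n - D p n) / p) := by
  obtain ⟨h1, h2, h3, h4⟩ := h
  cases l with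
  | zero =>
    have hn : n = f 0 := by simpa using h4
    have hfp : f 0 ≤ p - 1 := h2
    have hD : D p n = n := by rw [D, if_pos (by omega)]
    refine ⟨by omega, 0, ?_, ?_, ?_, ?_⟩
    · intro i hi; omega
    · simp [h3 1 (by omega)]
    · intro i hi; exact h3 (i + 1) (by omega)
    · have hz : n - D p n = 0 := by omega
      simp [hz, h3 1 (by omega)]
  | succ k =>
    set m := ∑ i ∈ Finset.range (k + 1), f (i + 1) * p ^ i with hm
    have hsum : n = p * m + f 0 := by rw [h4, sum_shift]
    have hf0 := h1 0 (by omega)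
    have hshift : P p (fun i => f (i + 1)) k m := by
      refine ⟨?_, h2, ?_, rfl⟩
      · intro i hi; exact h1 (i + 1) (by omega)
      · intro i hi; exact h3 (i + 1) (by omega)
    by_cases hn : n < p
    · have hpm : p * m = 0 := by omega
      have hm0 : m = 0 := by
        rcases Nat.mul_eq_zero.mp hpm with h | h
        · omega
        · exact h
      have hD : D p n = n := by rw [D, if_pos hn]
      refine ⟨by omega, k, ?_⟩
      rw [hD]
      simpa [hm0] using hshift
    · push_neg at hn
      set t := f 0 - (p - 1) with ht
      have htp : t < p := by omega
      have hnt : n - (p - 1) = p * m + t := by omega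
      have hmod : (n - (p - 1)) % p = t := by
        rw [hnt, Nat.mul_add_mod]
        exact Nat.mod_eq_of_lt htp
      have hdiv : (n - (p - 1)) / p = m := by
        rw [hnt, Nat.mul_add_div (by omega : 0 < p)]
        simp [Nat.div_eq_of_lt htp]
      have hD : D p n = f 0 := by rw [D, if_neg (by omega), hmod]; omega
      refine ⟨hD.symm, k, ?_⟩
      have : (n - D p n) / p = m := by
        rw [hD]
        have : n - f 0 = p * m := by omega
        rw [this, Nat.mul_div_cancel_left _ (by omega : 0 < p)]
      rw [this]
      exact hshift

lemma uniq (p : ℕ) (hp : 2 ≤ p) :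
    ∀ n, ∀ f l g l', P p f l n → P p g l' n → ∀ i, f i = g i := by
  intro n
  induction n using Nat.strong_induction_on with
  | _ n IH =>
    intro f l g l' hf hg i
    rcases Nat.eq_zero_or_pos n with h0 | h0
    · subst h0
      have key : ∀ (h : ℕ → ℕ) (lh : ℕ), P p h lh 0 → ∀ j, h j = 0 := by
        rintro h lh ⟨hh1, hh2, hh3, hh4⟩ j
        rcases Nat.lt_or_ge lh j with hj | hj
        · exact hh3 j hj
        · have := (Finset.sum_eq_zero_iff.mp hh4.symm) j
            (Finset.mem_range.mpr (by omega))
          have hpj : 0 < p ^ j := Nat.pow_pos (n := j) (by omega)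
          rcases Nat.mul_eq_zero.mp this with h | h
          · exact h
          · omega
      rw [key f l hf i, key g l' hg i]
    · obtain ⟨hfD, lf, hfs⟩ := step p hp hf
      obtain ⟨hgD, lg, hgs⟩ := step p hp hg
      have hmn : (n - D p n) / p < n := by
        have h1 : (n - D p n) / p ≤ n / p := Nat.div_le_div_right (Nat.sub_le _ _)
        have h2 : n / p < n := Nat.div_lt_self h0 (by omega)
        omega
      have hIH := IH _ hmn _ lf _ lg hfs hgs
      cases i with
      | zero => rw [hfD, hgD]
      | succ j => exact hIH j

end AdaptedExp

/-- Adapted base-`p` expansion (Erdmann-Henke): for a prime `p` and `n : ℕ`, there is a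
unique finitely supported digit sequence `f` such that, for some `l`, the digits satisfy
`p - 1 ≤ f i ≤ 2p - 2` for `i < l`, `f l ≤ p - 1`, `f i = 0` for `i > l`, and
`n = ∑_{i=0}^{l} f i * p^i`. -/
theorem adapted_base_p_expansion (p : ℕ) (hp : p.Prime) (n : ℕ) :
    ∃! f : ℕ →₀ ℕ, ∃ l : ℕ,
      (∀ i < l, p - 1 ≤ f i ∧ f i ≤ 2 * p - 2) ∧
      f l ≤ p - 1 ∧
      (∀ i > l, f i = 0) ∧
      n = ∑ i ∈ Finset.range (l + 1), f i * p ^ i := by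
  obtain ⟨f, l, hf⟩ := AdaptedExp.ex p hp.two_le n
  refine ⟨Finsupp.onFinset (Finset.range (l + 1)) f ?_, ⟨l, ?_⟩, ?_⟩
  · intro i hi
    rw [Finset.mem_range]
    by_contra hc
    exact hi (hf.2.2.1 i (by omega))
  · exact hf
  · intro g ⟨l', hg⟩
    apply Finsupp.ext
    intro i
    exact AdaptedExp.uniq p hp.two_le n (⇑g) l' f l hg hf i
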